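/- Assume char k ≠ 2. Let λ ∈ Emb(K) have finite G-orbit, and let V := V(λ). Then Aut(V) is isomorphic as a group to K(λ)^×/(K^× · λ(K)^×), the quotient of the unit group of the field K(λ) by the subgroup generated by the nonzero elements of K and the nonzero elements of λ(K). -/

import Mathlib

open TensorProduct

noncomputable section

variable (k K : Type*) [Field k] [Field K] [Algebra k K]

/-- The compositum `K(λ)` of `K` and `λ(K)` inside the algebraic closure of `K`. -/
def Klam (lam : K →ₐ[k] AlgebraicClosure K) : IntermediateField K (AlgebraicClosure K) :=
  IntermediateField.adjoin K (Set.range lam)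

theorem mem_Klam (lam : K →ₐ[k] AlgebraicClosure K) (x : K ⊗[k] K) :
    Algebra.TensorProduct.productMap (IsScalarTower.toAlgHom k K (AlgebraicClosure K)) lam x ∈
      Klam k K lam := by
  induction x using TensorProduct.induction_on with
  | zero => simpa using zero_mem (Klam k K lam)
  | tmul a b =>
      rw [Algebra.TensorProduct.productMap_apply_tmul]
      refine mul_mem ?_ (IntermediateField.subset_adjoin K _ ⟨b, rfl⟩)
      . show algebraMap K (AlgebraicClosure K) a ∈ Klam k K lam
        exact (Klam k K lam).algebraMap_mem a
  | add x y hx hy => rw [map_add]; exact add_mem hx hy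

/-- The ring map giving `K(λ)` its two-sided vector space structure,
`(a ⊗ b) ↦ a * λ b ∈ K(λ)`. -/
def VlamRingHom (lam : K →ₐ[k] AlgebraicClosure K) : (K ⊗[k] K) →+* ↥(Klam k K lam) :=
  RingHom.codRestrict
    (Algebra.TensorProduct.productMap (IsScalarTower.toAlgHom k K (AlgebraicClosure K))
      lam).toRingHom
    (Klam k K lam) (mem_Klam k K lam)

/-- The two-sided vector space `V(λ)`: the underlying set is `K(λ)`, with module structure
`(a ⊗ b) • v = a * v * λ b`. -/
def Vlam (lam : K →ₐ[k] AlgebraicClosure K) : Type _ := ↥(Klam k K lam)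

instance (lam : K →ₐ[k] AlgebraicClosure K) : AddCommGroup (Vlam k K lam) :=
  inferInstanceAs (AddCommGroup ↥(Klam k K lam))

set_option synthInstance.maxHeartbeats 1000000 in
instance (lam : K →ₐ[k] AlgebraicClosure K) : Module (K ⊗[k] K) (Vlam k K lam) :=
  Module.compHom ↥(Klam k K lam) (VlamRingHom k K lam)

/-- The orbit `λ^G` of an embedding `λ : K → K̄` under `G = Gal(K̄/K)` acting by
post-composition. -/
def Orb (lam : K →ₐ[k] AlgebraicClosure K) : Set (K →ₐ[k] AlgebraicClosure K) :=
  {ν | ∃ g : AlgebraicClosure K ≃ₐ[K] AlgebraicClosure K,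
    ν = (g.toAlgHom.restrictScalars k).comp lam}

/-- The subgroup of "inner" automorphisms of a two-sided vector space `V`, i.e. those of the
form `v ↦ a • v • b` for nonzero `a, b ∈ K`. -/
def innerAut (V : Type*) [AddCommGroup V] [Module (K ⊗[k] K) V] :
    Subgroup (V ≃ₗ[K ⊗[k] K] V) where
  carrier := {f | ∃ a b : Kˣ, ∀ v : V, f v = (((a : K) ⊗ₜ[k] (b : K)) : K ⊗[k] K) • v}
  one_mem' := ⟨1, 1, fun v => by
    show v = _
    rw [Units.val_one, ← Algebra.TensorProduct.one_def, one_smul]⟩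
  mul_mem' := by
    rintro f g ⟨a, b, hf⟩ ⟨c, d, hg⟩
    refine ⟨c * a, d * b, fun v => ?_⟩
    show f (g v) = _
    rw [hg, map_smul, hf, smul_smul, Algebra.TensorProduct.tmul_mul_tmul,
      Units.val_mul, Units.val_mul]
  inv_mem' := by
    rintro f ⟨a, b, hf⟩
    refine ⟨a⁻¹, b⁻¹, fun v => ?_⟩
    apply f.injective
    show f (f.symm v) = _
    rw [f.apply_symm_apply, hf, smul_smul, Algebra.TensorProduct.tmul_mul_tmul]
    rw [Units.val_inv_eq_inv_val, Units.val_inv_eq_inv_val, mul_inv_cancel₀ a.ne_zero,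
      mul_inv_cancel₀ b.ne_zero, ← Algebra.TensorProduct.one_def, one_smul]

instance (V : Type*) [AddCommGroup V] [Module (K ⊗[k] K) V] : (innerAut k K V).Normal := by
  constructor
  rintro f ⟨a, b, hf⟩ g
  refine ⟨a, b, fun v => ?_⟩
  show g (f (g.symm v)) = _
  rw [hf, map_smul, g.apply_symm_apply]

/-- The subgroup of `K(λ)ˣ` generated by the nonzero elements of `K` and the nonzero elements
of `λ(K)`. -/
def lamUnits (lam : K →ₐ[k] AlgebraicClosure K) : Subgroup (↥(Klam k K lam))ˣ :=
  Subgroup.closure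
    ({u : (↥(Klam k K lam))ˣ |
        ∃ a : K, ((u : ↥(Klam k K lam)) : AlgebraicClosure K) =
          algebraMap K (AlgebraicClosure K) a} ∪
      {u : (↥(Klam k K lam))ˣ |
        ∃ b : K, ((u : ↥(Klam k K lam)) : AlgebraicClosure K) = lam b})

instance (lam : K →ₐ[k] AlgebraicClosure K) : (lamUnits k K lam).Normal :=
  Subgroup.normal_of_comm _

-- auxiliary definitions and lemmas
section Aux
variable (lam : K →ₐ[k] AlgebraicClosure K)

def toV (v : ↥(Klam k K lam)) : Vlam k K lam := v
def ofV (v : Vlam k K lam) : ↥(Klam k K lam) := v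

theorem smul_toV (x : K ⊗[k] K) (v : ↥(Klam k K lam)) :
    x • toV k K lam v = toV k K lam (VlamRingHom k K lam x * v) := rfl

theorem VlamRingHom_surj (s : ↥(Klam k K lam)) : ∃ y, VlamRingHom k K lam y = s := by
  have halg : ∀ x ∈ Set.range lam, IsAlgebraic K x := fun x _ =>
    Algebra.IsAlgebraic.isAlgebraic x
  have hs : (s : AlgebraicClosure K) ∈ Algebra.adjoin K (Set.range lam) := by
    rw [← IntermediateField.adjoin_toSubalgebra_of_isAlgebraic halg]; exact s.2
  have hle : Algebra.adjoin K (Set.range lam) ≤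
      { carrier := Set.range (Algebra.TensorProduct.productMap
          (IsScalarTower.toAlgHom k K (AlgebraicClosure K)) lam)
        mul_mem' := by rintro _ _ ⟨x, rfl⟩ ⟨y, rfl⟩; exact ⟨x * y, map_mul _ _ _⟩
        add_mem' := by rintro _ _ ⟨x, rfl⟩ ⟨y, rfl⟩; exact ⟨x + y, map_add _ _ _⟩
        algebraMap_mem' := fun a => ⟨a ⊗ₜ 1, by simp⟩ } := by
    apply Algebra.adjoin_le
    rintro _ ⟨b, rfl⟩
    exact ⟨1 ⊗ₜ b, by simp⟩
  obtain ⟨y, hy⟩ := hle hs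
  exact ⟨y, Subtype.ext hy⟩

theorem Vlam_mul (f : Vlam k K lam ≃ₗ[K ⊗[k] K] Vlam k K lam) (s v : ↥(Klam k K lam)) :
    ofV k K lam (f (toV k K lam (s * v))) = s * ofV k K lam (f (toV k K lam v)) := by
  obtain ⟨y, hy⟩ := VlamRingHom_surj k K lam s
  have h1 : toV k K lam (s * v) = y • toV k K lam v := by
    rw [smul_toV, hy]
  rw [h1, map_smul]
  show VlamRingHom k K lam y * _ = _
  rw [hy]; rfl

theorem Vlam_apply (f : Vlam k K lam ≃ₗ[K ⊗[k] K] Vlam k K lam) (v : ↥(Klam k K lam)) :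
    ofV k K lam (f (toV k K lam v)) = v * ofV k K lam (f (toV k K lam 1)) := by
  have := Vlam_mul k K lam f v 1
  rwa [mul_one] at this

theorem Vlam_one_ne_zero (f : Vlam k K lam ≃ₗ[K ⊗[k] K] Vlam k K lam) :
    ofV k K lam (f (toV k K lam 1)) ≠ 0 := by
  intro h
  have h1 : f.symm (f (toV k K lam 1)) = toV k K lam 1 := f.symm_apply_apply _
  have h2 := Vlam_apply k K lam f.symm (ofV k K lam (f (toV k K lam 1)))
  have h3 : toV k K lam (ofV k K lam (f (toV k K lam 1))) = f (toV k K lam 1) := rfl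
  rw [h3, h1] at h2
  rw [h, zero_mul] at h2
  rw [show ofV k K lam (toV k K lam 1) = 1 from rfl] at h2
  exact one_ne_zero h2

def Phi : (Vlam k K lam ≃ₗ[K ⊗[k] K] Vlam k K lam) →* (↥(Klam k K lam))ˣ where
  toFun f := Units.mk0 _ (Vlam_one_ne_zero k K lam f)
  map_one' := by
    apply Units.ext
    show ofV k K lam (toV k K lam 1) = 1
    rfl
  map_mul' f g := by
    apply Units.ext
    show ofV k K lam (f (g (toV k K lam 1))) =
      ofV k K lam (f (toV k K lam 1)) * ofV k K lam (g (toV k K lam 1))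
    have h3 : g (toV k K lam 1) = toV k K lam (ofV k K lam (g (toV k K lam 1))) := rfl
    rw [h3, Vlam_apply k K lam f (ofV k K lam (g (toV k K lam 1)))]
    exact mul_comm _ _

theorem Phi_surj : Function.Surjective (Phi k K lam) := by
  intro u
  refine ⟨{ toFun := fun v => toV k K lam (ofV k K lam v * (u : ↥(Klam k K lam)))
            invFun := fun v => toV k K lam (ofV k K lam v * ((u⁻¹ : (↥(Klam k K lam))ˣ) : ↥(Klam k K lam)))
            map_add' := fun v w => by
              show toV k K lam ((ofV k K lam v + ofV k K lam w) * _) = _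
              rw [add_mul]; rfl
            map_smul' := fun x v => by
              show toV k K lam (ofV k K lam (x • v) * _) = x • toV k K lam (ofV k K lam v * _)
              rw [smul_toV]
              show toV k K lam ((VlamRingHom k K lam x * ofV k K lam v) * _) = toV k K lam _
              rw [mul_assoc]
            left_inv := fun v => by
              show toV k K lam ((ofV k K lam v * _) * _) = v
              rw [mul_assoc, Units.mul_inv, mul_one]; rfl
            right_inv := fun v => by
              show toV k K lam ((ofV k K lam v * _) * _) = v
              rw [mul_assoc, Units.inv_mul, mul_one]; rfl }, ?_⟩
  apply Units.ext
  show (1 : ↥(Klam k K lam)) * (u : ↥(Klam k K lam)) = (u : ↥(Klam k K lam))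
  rw [one_mul]

theorem lamUnits_le : lamUnits k K lam ≤
    { carrier := {u : (↥(Klam k K lam))ˣ | ∃ a b : K,
        ((u : ↥(Klam k K lam)) : AlgebraicClosure K) =
          algebraMap K (AlgebraicClosure K) a * lam b}
      one_mem' := ⟨1, 1, by simp⟩
      mul_mem' := by
        rintro u v ⟨a, b, hu⟩ ⟨c, d, hv⟩
        refine ⟨a * c, b * d, ?_⟩
        have h : (((u * v : (↥(Klam k K lam))ˣ) : ↥(Klam k K lam)) : AlgebraicClosure K)
            = ((u : ↥(Klam k K lam)) : AlgebraicClosure K) *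
              ((v : ↥(Klam k K lam)) : AlgebraicClosure K) := rfl
        rw [h, hu, hv, map_mul, map_mul]
        ring
      inv_mem' := by
        rintro u ⟨a, b, hu⟩
        refine ⟨a⁻¹, b⁻¹, ?_⟩
        rw [Units.val_inv_eq_inv_val, IntermediateField.coe_inv, hu, map_inv₀, map_inv₀,
          mul_inv] } := by
  apply Subgroup.closure_le _ |>.mpr
  rintro u (⟨a, ha⟩ | ⟨b, hb⟩)
  · exact ⟨a, 1, by rw [ha, map_one, mul_one]⟩
  · exact ⟨1, b, by rw [hb, map_one, one_mul]⟩

theorem Phi_mem_iff (f : Vlam k K lam ≃ₗ[K ⊗[k] K] Vlam k K lam) :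
    Phi k K lam f ∈ lamUnits k K lam ↔ f ∈ innerAut k K (Vlam k K lam) := by
  constructor
  · intro hmem
    obtain ⟨a, b, hab⟩ := lamUnits_le k K lam hmem
    have hval : ((ofV k K lam (f (toV k K lam 1)) : ↥(Klam k K lam)) : AlgebraicClosure K)
        = algebraMap K (AlgebraicClosure K) a * lam b := hab
    have hne : ofV k K lam (f (toV k K lam 1)) ≠ 0 := Vlam_one_ne_zero k K lam f
    have hne' : algebraMap K (AlgebraicClosure K) a * lam b ≠ 0 := by
      rw [← hval]
      exact fun h => hne (Subtype.ext h)
    have ha : a ≠ 0 := by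
      rintro rfl; rw [map_zero, zero_mul] at hne'; exact hne' rfl
    have hb : b ≠ 0 := by
      rintro rfl; rw [map_zero, mul_zero] at hne'; exact hne' rfl
    refine ⟨Units.mk0 a ha, Units.mk0 b hb, fun v => ?_⟩
    have h1 : f v = toV k K lam (ofV k K lam v * ofV k K lam (f (toV k K lam 1))) := by
      have h2 := Vlam_apply k K lam f (ofV k K lam v)
      have h3 : toV k K lam (ofV k K lam (f (toV k K lam (ofV k K lam v))))
          = f (toV k K lam (ofV k K lam v)) := rfl
      show f (toV k K lam (ofV k K lam v)) = _
      rw [← h3, h2]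
    rw [h1]
    show _ = (((a : K) ⊗ₜ[k] (b : K)) : K ⊗[k] K) • toV k K lam (ofV k K lam v)
    rw [smul_toV]
    congr 1
    rw [mul_comm]
    congr 1
    apply Subtype.ext
    rw [hval]
    show Algebra.TensorProduct.productMap
      (IsScalarTower.toAlgHom k K (AlgebraicClosure K)) lam ((a : K) ⊗ₜ[k] (b : K)) = _
    rw [Algebra.TensorProduct.productMap_apply_tmul]
    rfl
  · rintro ⟨a, b, hf⟩
    have h1 : ofV k K lam (f (toV k K lam 1)) =
        VlamRingHom k K lam (((a : K) ⊗ₜ[k] (b : K))) := by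
      have := hf (toV k K lam 1)
      rw [smul_toV, mul_one] at this
      exact congrArg (ofV k K lam) this
    have hval : ((ofV k K lam (f (toV k K lam 1)) : ↥(Klam k K lam)) : AlgebraicClosure K)
        = algebraMap K (AlgebraicClosure K) (a : K) * lam (b : K) := by
      rw [h1]
      show Algebra.TensorProduct.productMap
        (IsScalarTower.toAlgHom k K (AlgebraicClosure K)) lam ((a : K) ⊗ₜ[k] (b : K)) = _
      rw [Algebra.TensorProduct.productMap_apply_tmul]
      rfl
    -- write Phi f as product of two generators
    have hu1mem : (algebraMap K (AlgebraicClosure K) (a : K)) ∈ Klam k K lam :=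
      (Klam k K lam).algebraMap_mem _
    have hu2mem : (lam (b : K)) ∈ Klam k K lam :=
      IntermediateField.subset_adjoin K _ ⟨b, rfl⟩
    have h1ne : (⟨algebraMap K (AlgebraicClosure K) (a : K), hu1mem⟩ : ↥(Klam k K lam)) ≠ 0 :=
      fun h => a.ne_zero ((algebraMap K (AlgebraicClosure K)).injective
        (by simpa using congrArg Subtype.val h))
    have h2ne : (⟨lam (b : K), hu2mem⟩ : ↥(Klam k K lam)) ≠ 0 :=
      fun h => b.ne_zero (lam.injective (by simpa using congrArg Subtype.val h))
    have key : Phi k K lam f = Units.mk0 _ h1ne * Units.mk0 _ h2ne := by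
      apply Units.ext
      apply Subtype.ext
      show ((ofV k K lam (f (toV k K lam 1)) : ↥(Klam k K lam)) : AlgebraicClosure K) = _
      rw [hval]; rfl
    rw [key]
    exact mul_mem (Subgroup.subset_closure (Or.inl ⟨a, rfl⟩))
      (Subgroup.subset_closure (Or.inr ⟨b, rfl⟩))

end Aux

variable [PerfectField k] [FiniteDimensional k K]

/-- Assume `char k ≠ 2`.  Let `λ ∈ Emb(K)` have finite `G`-orbit and let
`V := V(λ)`.  Then `Aut V` is isomorphic as a group to `K(λ)ˣ/(Kˣ · λ(K)ˣ)`. -/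
theorem autVlam_eq_units_quot (hchar : ringChar k ≠ 2)
    (lam : K →ₐ[k] AlgebraicClosure K) (horb : (Orb k K lam).Finite) :
    Nonempty
      (((Vlam k K lam ≃ₗ[K ⊗[k] K] Vlam k K lam) ⧸ innerAut k K (Vlam k K lam)) ≃*
        ((↥(Klam k K lam))ˣ ⧸ lamUnits k K lam)) := by
  let Psi := (QuotientGroup.mk' (lamUnits k K lam)).comp (Phi k K lam)
  have hsurj : Function.Surjective Psi :=
    (QuotientGroup.mk'_surjective _).comp (Phi_surj k K lam)
  have hker : Psi.ker = innerAut k K (Vlam k K lam) := by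
    ext f
    rw [MonoidHom.mem_ker]
    show QuotientGroup.mk' _ (Phi k K lam f) = 1 ↔ _
    rw [QuotientGroup.mk'_apply, QuotientGroup.eq_one_iff, Phi_mem_iff]
  exact ⟨(QuotientGroup.quotientMulEquivOfEq hker.symm).trans
    (QuotientGroup.quotientKerEquivOfSurjective Psi hsurj)⟩
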